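/- arXiv:2502.08043 — 2 statements merged into one kernel-verified Lean document; each statement's English description precedes it below -/
import Mathlib

section
/- The 2D Euler left eigenvectors admit the sparse splitting l₁ = ξ₁ − ξ₂, l₂ = ξ₂ − ξ₃, l₃ = ξ₄, l₄ = ξ₁ + ξ₂, where ξ₁ = (−u, 1, 0, 0), ξ₂ = ((γ−1)/c)(|u⃗|²/2, −u, −v, 1), ξ₃ = (c, 0, 0, 0), ξ₄ = (−v, 0, 1, 0); and with this choice L R = I, where R is the right eigenmatrix with columns r₁ = ½(0,1,0,u)ᵀ − (1/(2c))(1,u,v,H)ᵀ, r₂ = −(1/c)(1,u,v,|u⃗|²/2)ᵀ, r₃ = (0,0,1,v)ᵀ, r₄ = ½(0,1,0,u)ᵀ + (1/(2c))(1,u,v,H)ᵀ. -/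
open Matrix

set_option maxHeartbeats 2000000 in

/-- The 2D Euler left eigenvectors split as `l₁ = ξ₁ - ξ₂`, `l₂ = ξ₂ - ξ₃`,
`l₃ = ξ₄`, `l₄ = ξ₁ + ξ₂` with the sparse vectors `ξᵢ` given below, and with
this normalization `L · R = I` where `R` is the right eigenmatrix. -/
theorem euler2D_left_right_eigenmatrix_identity (ρ u v p γ : ℝ)
    (hρ : 0 < ρ) (hp : 0 < p) (hγ : 1 < γ)
    (c H : ℝ) (hc : c = Real.sqrt (γ * p / ρ))
    (hH : H = c ^ 2 / (γ - 1) + (u ^ 2 + v ^ 2) / 2)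
    (ξ₁ ξ₂ ξ₃ ξ₄ : Fin 4 → ℝ)
    (hξ₁ : ξ₁ = ![-u, 1, 0, 0])
    (hξ₂ : ξ₂ = ((γ - 1) / c) • ![(u ^ 2 + v ^ 2) / 2, -u, -v, 1])
    (hξ₃ : ξ₃ = ![c, 0, 0, 0])
    (hξ₄ : ξ₄ = ![-v, 0, 1, 0])
    (L R : Matrix (Fin 4) (Fin 4) ℝ)
    (hL : L = Matrix.of ![ξ₁ - ξ₂, ξ₂ - ξ₃, ξ₄, ξ₁ + ξ₂])
    (hR : R = (Matrix.of ![(1 / 2 : ℝ) • ![0, 1, 0, u] - (1 / (2 * c)) • ![1, u, v, H],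
                (-(1 / c) : ℝ) • ![1, u, v, (u ^ 2 + v ^ 2) / 2],
                ![0, 0, 1, v],
                (1 / 2 : ℝ) • ![0, 1, 0, u] + (1 / (2 * c)) • ![1, u, v, H]])ᵀ) :
    L * R = 1 := by

  have hc0 : 0 < c := by
    rw [hc]; exact Real.sqrt_pos.mpr (by positivity)
  have hcne : c ≠ 0 := ne_of_gt hc0
  have hγne : γ - 1 ≠ 0 := sub_ne_zero.mpr (ne_of_gt hγ)
  subst hH hξ₁ hξ₂ hξ₃ hξ₄ hL hR
  ext i j
  fin_cases i <;> fin_cases j <;>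
    simp only [Matrix.mul_apply, Fin.sum_univ_four, Matrix.transpose_apply, Matrix.of_apply,
      Matrix.cons_val', Matrix.cons_val_zero, Matrix.cons_val_one, Matrix.head_cons,
      Matrix.cons_val_two, Matrix.cons_val_three, Matrix.tail_cons, Matrix.head_fin_const,
      Matrix.empty_val', Matrix.cons_val_fin_one, Pi.smul_apply, Pi.sub_apply, Pi.add_apply,
      smul_eq_mul, Matrix.one_apply, Fin.isValue] <;>
    (try norm_num [Fin.ext_iff]) <;> (try field_simp) <;> (try ring)
end

section
/- SOS decomposition of the WENO-JS smoothness indicator for quartics: for every polynomial p of degree ≤ 4 and every h > 0, ∫_{−h/2}^{h/2} Σ_{l=1}^{4} h^{2l−1} (p^{(l)}(x))² dx = (h p'(0) + h³ p'''(0)/24)² + (520 h² p''(0) + 21 h⁴ p⁗(0))²/249600 + (781/720)(h³ p'''(0))² + (1421461/1310400)(h⁴ p⁗(0))². -/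
open Polynomial

lemma integ_poly6 (c0 c1 c2 c3 c4 c5 c6 a b : ℝ) :
    ∫ x in a..b, (c0 + c1*x + c2*x^2 + c3*x^3 + c4*x^4 + c5*x^5 + c6*x^6) =
      (c0*b + c1/2*b^2 + c2/3*b^3 + c3/4*b^4 + c4/5*b^5 + c5/6*b^6 + c6/7*b^7)
      - (c0*a + c1/2*a^2 + c2/3*a^3 + c3/4*a^4 + c4/5*a^5 + c5/6*a^6 + c6/7*a^7) := by
  have H : ∀ x : ℝ, HasDerivAt
      (fun x : ℝ => c0*x + c1/2*x^2 + c2/3*x^3 + c3/4*x^4 + c4/5*x^5 + c5/6*x^6 + c6/7*x^7)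
      (c0 + c1*x + c2*x^2 + c3*x^3 + c4*x^4 + c5*x^5 + c6*x^6) x := by
    intro x
    have h1 := (((((((hasDerivAt_pow 1 x).const_mul c0).add
      ((hasDerivAt_pow 2 x).const_mul (c1/2))).add
      ((hasDerivAt_pow 3 x).const_mul (c2/3))).add
      ((hasDerivAt_pow 4 x).const_mul (c3/4))).add
      ((hasDerivAt_pow 5 x).const_mul (c4/5))).add
      ((hasDerivAt_pow 6 x).const_mul (c5/6))).add
      ((hasDerivAt_pow 7 x).const_mul (c6/7))
    convert h1 using 1
    · rfl
    · rfl
    · funext y; simp only [Pi.add_apply]; push_cast; ring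
    · push_cast; ring
  rw [intervalIntegral.integral_eq_sub_of_hasDerivAt (fun x _ => H x)
    ((by fun_prop : Continuous fun x : ℝ =>
      c0 + c1*x + c2*x^2 + c3*x^3 + c4*x^4 + c5*x^5 + c6*x^6).intervalIntegrable a b)]

/-- Sum-of-squares decomposition of the WENO-JS smoothness indicator for
polynomials of degree ≤ 4. -/
theorem weno_smoothness_indicator_sos (p : Polynomial ℝ) (hdeg : p.degree ≤ 4)
    (h : ℝ) (hh : 0 < h) :
    ∫ x in (-(h / 2))..(h / 2),
        ∑ l ∈ Finset.Icc 1 4,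
          h ^ (2 * l - 1) * ((derivative^[l] p).eval x) ^ 2 =
      (h * (derivative p).eval 0 +
          (1 / 24) * h ^ 3 * (derivative^[3] p).eval 0) ^ 2 +
      (520 * h ^ 2 * (derivative^[2] p).eval 0 +
          21 * h ^ 4 * (derivative^[4] p).eval 0) ^ 2 / 249600 +
      (781 / 720) * (h ^ 3 * (derivative^[3] p).eval 0) ^ 2 +
      (1421461 / 1310400) * (h ^ 4 * (derivative^[4] p).eval 0) ^ 2 := by
  have hnat : p.natDegree ≤ 4 := natDegree_le_iff_degree_le.mpr hdeg
  have hc : ∀ k, 5 ≤ k → p.coeff k = 0 := fun k hk =>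
    coeff_eq_zero_of_natDegree_lt (lt_of_le_of_lt hnat hk)
  have hd : ∀ l : ℕ, (derivative^[l] p).natDegree < 5 := fun l =>
    lt_of_le_of_lt (((natDegree_iterate_derivative p l).trans (Nat.sub_le _ _)).trans hnat)
      (by norm_num)
  have e : ∀ (l : ℕ) (x : ℝ), (derivative^[l] p).eval x =
      ∑ i ∈ Finset.range 5, ((i + l).descFactorial l : ℝ) * p.coeff (i + l) * x ^ i := by
    intro l x
    rw [eval_eq_sum_range' (hd l) x]
    refine Finset.sum_congr rfl fun i _ => ?_
    rw [coeff_iterate_derivative, nsmul_eq_mul]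
  have E1 : ∀ x : ℝ, (derivative^[1] p).eval x =
      p.coeff 1 + 2*p.coeff 2*x + 3*p.coeff 3*x^2 + 4*p.coeff 4*x^3 := by
    intro x
    rw [e 1 x]
    norm_num [Finset.sum_range_succ, Nat.descFactorial, hc 5 le_rfl]
  have E2 : ∀ x : ℝ, (derivative^[2] p).eval x =
      2*p.coeff 2 + 6*p.coeff 3*x + 12*p.coeff 4*x^2 := by
    intro x
    rw [e 2 x]
    norm_num [Finset.sum_range_succ, Nat.descFactorial, hc 5 le_rfl, hc 6 (by norm_num)]
  have E3 : ∀ x : ℝ, (derivative^[3] p).eval x = 6*p.coeff 3 + 24*p.coeff 4*x := by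
    intro x
    rw [e 3 x]
    norm_num [Finset.sum_range_succ, Nat.descFactorial, hc 5 le_rfl, hc 6 (by norm_num),
      hc 7 (by norm_num)]
  have E4 : ∀ x : ℝ, (derivative^[4] p).eval x = 24*p.coeff 4 := by
    intro x
    rw [e 4 x]
    norm_num [Finset.sum_range_succ, Nat.descFactorial, hc 5 le_rfl, hc 6 (by norm_num),
      hc 7 (by norm_num), hc 8 (by norm_num)]
  have hEq : Set.EqOn
      (fun x : ℝ => ∑ l ∈ Finset.Icc 1 4, h ^ (2 * l - 1) * ((derivative^[l] p).eval x) ^ 2)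
      (fun x : ℝ =>
        (576*h^7*(p.coeff 4)*(p.coeff 4) + 36*h^5*(p.coeff 3)*(p.coeff 3)
            + 4*h^3*(p.coeff 2)*(p.coeff 2) + h*(p.coeff 1)*(p.coeff 1))
        + (288*h^5*(p.coeff 3)*(p.coeff 4) + 24*h^3*(p.coeff 2)*(p.coeff 3)
            + 4*h*(p.coeff 1)*(p.coeff 2))*x
        + (576*h^5*(p.coeff 4)*(p.coeff 4) + 36*h^3*(p.coeff 3)*(p.coeff 3)
            + 48*h^3*(p.coeff 2)*(p.coeff 4) + 4*h*(p.coeff 2)*(p.coeff 2)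
            + 6*h*(p.coeff 1)*(p.coeff 3))*x^2
        + (144*h^3*(p.coeff 3)*(p.coeff 4) + 12*h*(p.coeff 2)*(p.coeff 3)
            + 8*h*(p.coeff 1)*(p.coeff 4))*x^3
        + (144*h^3*(p.coeff 4)*(p.coeff 4) + 9*h*(p.coeff 3)*(p.coeff 3)
            + 16*h*(p.coeff 2)*(p.coeff 4))*x^4
        + (24*h*(p.coeff 3)*(p.coeff 4))*x^5
        + (16*h*(p.coeff 4)*(p.coeff 4))*x^6)
      (Set.uIcc (-(h/2)) (h/2)) := by
    intro x _
    show (∑ l ∈ Finset.Icc 1 4, h ^ (2 * l - 1) * ((derivative^[l] p).eval x) ^ 2) = _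
    rw [show (Finset.Icc 1 4 : Finset ℕ) = {1, 2, 3, 4} by decide,
      Finset.sum_insert (by decide), Finset.sum_insert (by decide),
      Finset.sum_insert (by decide), Finset.sum_singleton, E1 x, E2 x, E3 x, E4 x]
    norm_num
    ring
  rw [intervalIntegral.integral_congr hEq, integ_poly6,
    show derivative p = derivative^[1] p from rfl,
    E1 0, E2 0, E3 0, E4 0]
  ring
end
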